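/- arXiv:2601.17579 — 2 statements merged into one kernel-verified Lean document; each statement's English description precedes it below -/
import Mathlib

section
/- Let H and H₁ be Hilbert spaces and let i : H₁ → H be an injective continuous linear map. Let (v_n) be a bounded sequence in H₁ and v ∈ H such that i(v_n) converges weakly to v in H. Then there exists w ∈ H₁ with i(w) = v and such that v_n converges weakly to w in H₁. -/
open MeasureTheory Filter Topology

/-- If `i : H₁ → H` is an injective continuous linear map between Hilbert spaces,
`(v_n)` is bounded in `H₁` and `i(v_n) ⇀ v` in `H`, then `v = i(w)` for some `w ∈ H₁`
and `v_n ⇀ w` in `H₁`. -/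
theorem stmt12 {H H₁ : Type*}
    [NormedAddCommGroup H] [InnerProductSpace ℝ H] [CompleteSpace H]
    [NormedAddCommGroup H₁] [InnerProductSpace ℝ H₁] [CompleteSpace H₁]
    (i : H₁ →L[ℝ] H) (hi : Function.Injective i)
    (v : H) (vn : ℕ → H₁)
    (hbdd : ∃ M : ℝ, ∀ n, ‖vn n‖ ≤ M)
    (hconv : ∀ u : H, Tendsto (fun n => (inner ℝ u (i (vn n)) : ℝ)) atTop
      (𝓝 (inner ℝ u v : ℝ))) :
    ∃ w : H₁, i w = v ∧
      ∀ u : H₁, Tendsto (fun n => (inner ℝ u (vn n) : ℝ)) atTop (𝓝 (inner ℝ u w : ℝ)) := by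
  obtain ⟨M₀, hM₀⟩ := hbdd
  set M : ℝ := max M₀ 0 with hM
  have hMnn : 0 ≤ M := le_max_right _ _
  have hMb : ∀ n, ‖vn n‖ ≤ M := fun n => (hM₀ n).trans (le_max_left _ _)
  set A : H →L[ℝ] H₁ := ContinuousLinearMap.adjoint i with hA
  have hAinner : ∀ (z : H) (x : H₁), (inner ℝ (A z) x : ℝ) = inner ℝ z (i x) := fun z x =>
    ContinuousLinearMap.adjoint_inner_left i x z
  -- the range of the adjoint is dense
  have hdense : Dense ((LinearMap.range (A : H →ₗ[ℝ] H₁) : Submodule ℝ H₁) : Set H₁) := by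
    rw [Submodule.dense_iff_topologicalClosure_eq_top,
      Submodule.topologicalClosure_eq_top_iff]
    rw [Submodule.eq_bot_iff]
    intro u hu
    have h0 : ∀ z : H, (inner ℝ z (i u) : ℝ) = 0 := by
      intro z
      have := hu (A z) ⟨z, rfl⟩
      rwa [hAinner] at this
    have : i u = 0 := by
      apply ext_inner_left ℝ
      intro z; simp [h0 z]
    have : i u = i 0 := by simpa using this
    exact hi this
  -- existence of limits of ⟨u, vn n⟩
  have hex : ∀ u : H₁, ∃ l : ℝ, Tendsto (fun n => (inner ℝ u (vn n) : ℝ)) atTop (𝓝 l) := by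
    intro u
    apply cauchySeq_tendsto_of_complete
    rw [Metric.cauchySeq_iff]
    intro ε hε
    have hδ : (0:ℝ) < ε / (4 * (M + 1)) := by positivity
    obtain ⟨u', hu'mem⟩ := Metric.dense_iff.mp hdense u _ hδ
    obtain ⟨z, hz⟩ := hu'mem.2
    have hb : Tendsto (fun n => (inner ℝ u' (vn n) : ℝ)) atTop (𝓝 (inner ℝ z v : ℝ)) := by
      have := hconv z
      simpa [← hz, hAinner] using this
    have hbc : CauchySeq (fun n => (inner ℝ u' (vn n) : ℝ)) := hb.cauchySeq
    obtain ⟨N, hN⟩ := Metric.cauchySeq_iff.mp hbc (ε / 2) (by positivity)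
    refine ⟨N, fun m hm n hn => ?_⟩
    have hdist : ‖u - u'‖ < ε / (4 * (M + 1)) := by
      rw [← dist_eq_norm]
      simpa [dist_comm] using (Metric.mem_ball.mp hu'mem.1)
    have key : ∀ k, |(inner ℝ u (vn k) : ℝ) - inner ℝ u' (vn k)| ≤ ε / 4 := by
      intro k
      have : (inner ℝ u (vn k) : ℝ) - inner ℝ u' (vn k) = inner ℝ (u - u') (vn k) := by
        rw [inner_sub_left]
      rw [this]
      calc |(inner ℝ (u - u') (vn k) : ℝ)| ≤ ‖u - u'‖ * ‖vn k‖ := abs_real_inner_le_norm _ _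
        _ ≤ (ε / (4 * (M + 1))) * (M + 1) := by
            apply mul_le_mul hdist.le ((hMb k).trans (by linarith)) (norm_nonneg _) hδ.le
        _ = ε / 4 := by field_simp
    have hNmn := hN m hm n hn
    rw [Real.dist_eq] at hNmn ⊢
    have : (inner ℝ u (vn m) : ℝ) - inner ℝ u (vn n) =
        ((inner ℝ u (vn m) : ℝ) - inner ℝ u' (vn m)) - ((inner ℝ u (vn n) : ℝ) - inner ℝ u' (vn n))
        + ((inner ℝ u' (vn m) : ℝ) - inner ℝ u' (vn n)) := by ring
    rw [this]
    calc _ ≤ |((inner ℝ u (vn m) : ℝ) - inner ℝ u' (vn m)) - ((inner ℝ u (vn n) : ℝ) - inner ℝ u' (vn n))|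
          + |(inner ℝ u' (vn m) : ℝ) - inner ℝ u' (vn n)| := abs_add_le _ _
      _ ≤ (|(inner ℝ u (vn m) : ℝ) - inner ℝ u' (vn m)| + |(inner ℝ u (vn n) : ℝ) - inner ℝ u' (vn n)|)
          + |(inner ℝ u' (vn m) : ℝ) - inner ℝ u' (vn n)| := by
            gcongr; exact abs_sub _ _
      _ < ε := by linarith [key m, key n, hNmn]
  -- the limit functional
  set g : H₁ → ℝ := fun u => limUnder atTop (fun n => (inner ℝ u (vn n) : ℝ)) with hg_def
  have hg : ∀ u : H₁, Tendsto (fun n => (inner ℝ u (vn n) : ℝ)) atTop (𝓝 (g u)) := fun u =>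
    tendsto_nhds_limUnder (hex u)
  have hadd : ∀ u u' : H₁, g (u + u') = g u + g u' := by
    intro u u'
    refine tendsto_nhds_unique (hg (u + u')) ?_
    simpa [inner_add_left] using (hg u).add (hg u')
  have hsmul : ∀ (c : ℝ) (u : H₁), g (c • u) = c * g u := by
    intro c u
    refine tendsto_nhds_unique (hg (c • u)) ?_
    simpa [real_inner_smul_left] using (hg u).const_mul c
  have hbound : ∀ u : H₁, |g u| ≤ M * ‖u‖ := by
    intro u
    refine le_of_tendsto (hg u).abs (Filter.Eventually.of_forall fun n => ?_)
    calc |(inner ℝ u (vn n) : ℝ)| ≤ ‖u‖ * ‖vn n‖ := abs_real_inner_le_norm _ _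
      _ ≤ ‖u‖ * M := by
          exact mul_le_mul_of_nonneg_left (hMb n) (norm_nonneg _)
      _ = M * ‖u‖ := mul_comm _ _
  set L : H₁ →L[ℝ] ℝ :=
    LinearMap.mkContinuous
      { toFun := g, map_add' := hadd, map_smul' := hsmul } M
      (fun u => by simpa [Real.norm_eq_abs] using hbound u) with hL_def
  set w : H₁ := (InnerProductSpace.toDual ℝ H₁).symm L with hw_def
  have hw : ∀ u : H₁, (inner ℝ u w : ℝ) = g u := by
    intro u
    rw [real_inner_comm]
    exact InnerProductSpace.toDual_symm_apply
  refine ⟨w, ?_, fun u => by rw [hw u]; exact hg u⟩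
  apply ext_inner_left ℝ
  intro z
  have h1 : (inner ℝ z (i w) : ℝ) = g (A z) := by
    rw [← hAinner z w, hw (A z)]
  have h2 : Tendsto (fun n => (inner ℝ (A z) (vn n) : ℝ)) atTop (𝓝 (inner ℝ z v : ℝ)) := by
    simpa [hAinner] using hconv z
  rw [h1]
  exact tendsto_nhds_unique (hg (A z)) h2
end

section
/- Let d ≥ 1, 0 < α ≤ β, and let U ⊆ ℝ^d be open. Let (A_n) be a sequence in M(α,β;U) and let A : U → ℝ^{d×d} be measurable and essentially bounded such that A_n converges to A in the weak-* sense, i.e. for every pair of indices i,j and every g ∈ L¹(U), ∫_U (A_n(x))_{ij} g(x) dx → ∫_U (A(x))_{ij} g(x) dx. Then A ∈ M(α,β;U); in other words, both defining inequalities of M(α,β;U) are preserved under weak-* limits. -/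
open MeasureTheory Filter Topology

noncomputable section

/-- The class `M(α,β;U)` of admissible matrix-valued coefficients: measurable,
essentially bounded matrix fields satisfying `A(x)ξ·ξ ≥ α|ξ|²` and
`A(x)ξ·ξ ≥ (1/β)|A(x)ξ|²` for all `ξ` and a.e. `x ∈ U`. -/
def MemM (d : ℕ) (α β : ℝ) (U : Set (EuclideanSpace ℝ (Fin d)))
    (A : EuclideanSpace ℝ (Fin d) → Matrix (Fin d) (Fin d) ℝ) : Prop :=
  (∀ i j, Measurable fun x => A x i j) ∧
  (∃ M : ℝ, ∀ᵐ x ∂(volume.restrict U), ∀ i j, |A x i j| ≤ M) ∧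
  (∀ᵐ x ∂(volume.restrict U), ∀ ξ : Fin d → ℝ,
    α * ∑ i, ξ i ^ 2 ≤ dotProduct ((A x).mulVec ξ) ξ ∧
    (1 / β) * ∑ i, ((A x).mulVec ξ i) ^ 2 ≤ dotProduct ((A x).mulVec ξ) ξ)

/-- If a measurable, essentially bounded function has nonnegative integral on every
finite-measure set, it is a.e. nonnegative (σ-finite measure). -/
lemma aux_ae_nonneg {X : Type*} [MeasurableSpace X] (μ : Measure X) [SigmaFinite μ]
    (f : X → ℝ) (hf : Measurable f) (C : ℝ) (hC : ∀ᵐ x ∂μ, |f x| ≤ C)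
    (h : ∀ E : Set X, MeasurableSet E → μ E < ⊤ → 0 ≤ ∫ x in E, f x ∂μ) :
    0 ≤ᵐ[μ] f := by
  set T : Set X := {x | |f x| ≤ C} with hT
  have hTm : MeasurableSet T := measurableSet_le hf.abs measurable_const
  have key : ∀ᵐ x ∂(μ.restrict T), 0 ≤ f x := by
    apply ae_of_forall_measure_lt_top_ae_restrict
    intro s hs hsfin
    rw [Measure.restrict_restrict hs]
    have hsT : μ (s ∩ T) < ⊤ := by
      rw [Measure.restrict_apply hs] at hsfin; exact hsfin
    apply ae_nonneg_of_forall_setIntegral_nonneg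
    · refine Integrable.mono' (g := fun _ => C) (integrableOn_const hsT.ne)
        hf.aestronglyMeasurable.restrict ?_
      refine (ae_restrict_mem (hs.inter hTm)).mono fun x hx => ?_
      exact (Real.norm_eq_abs _).trans_le hx.2
    · intro u hu hufin
      rw [Measure.restrict_restrict hu]
      exact h (u ∩ (s ∩ T)) (hu.inter (hs.inter hTm))
        (lt_of_le_of_lt (measure_mono Set.inter_subset_right) hsT)
  rw [ae_restrict_iff' hTm] at key
  filter_upwards [key, hC] with x hx1 hx2 using hx1 hx2

/-- Rewriting the bilinear expression as a dot product. -/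
lemma lin_eq {d : ℕ} (B : Matrix (Fin d) (Fin d) ℝ) (ξ ζ : Fin d → ℝ) :
    (∑ i, ∑ j, ζ i * ξ j * B i j) = dotProduct (B.mulVec ξ) ζ := by
  simp only [dotProduct, Matrix.mulVec, Finset.sum_mul]
  exact Finset.sum_congr rfl fun i _ => Finset.sum_congr rfl fun j _ => by ring

/-- Pointwise linear-algebra lemma: the two ellipticity inequalities on a dense set of
directions (in the "dual" formulation for the second one) imply them everywhere. -/
lemma aux_pointwise {d : ℕ} {α β : ℝ} (hβ : 0 < β) (B : Matrix (Fin d) (Fin d) ℝ)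
    (D : Set (Fin d → ℝ)) (hD : Dense D)
    (h1 : ∀ ξ ∈ D, α * ∑ i, ξ i ^ 2 ≤ dotProduct (B.mulVec ξ) ξ)
    (h2 : ∀ ξ ∈ D, ∀ η ∈ D, dotProduct (B.mulVec ξ) η ≤
      dotProduct (B.mulVec ξ) ξ + β / 4 * ∑ i, η i ^ 2) :
    ∀ ξ : Fin d → ℝ, α * ∑ i, ξ i ^ 2 ≤ dotProduct (B.mulVec ξ) ξ ∧
      (1 / β) * ∑ i, (B.mulVec ξ i) ^ 2 ≤ dotProduct (B.mulVec ξ) ξ := by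
  have hmv : ∀ i, Continuous (fun ξ : Fin d → ℝ => B.mulVec ξ i) := by
    intro i
    simp only [Matrix.mulVec, dotProduct]
    exact continuous_finset_sum _ fun j _ => continuous_const.mul (continuous_apply j)
  have hdp : Continuous fun p : (Fin d → ℝ) × (Fin d → ℝ) =>
      dotProduct (B.mulVec p.1) p.2 := by
    simp only [dotProduct]
    exact continuous_finset_sum _ fun i _ =>
      ((hmv i).comp continuous_fst).mul ((continuous_apply i).comp continuous_snd)
  have hsq : Continuous fun ξ : Fin d → ℝ => ∑ i, ξ i ^ 2 :=
    continuous_finset_sum _ fun i _ => (continuous_apply i).pow 2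
  have h1' : ∀ ξ, α * ∑ i, ξ i ^ 2 ≤ dotProduct (B.mulVec ξ) ξ := by
    have hcl : IsClosed {ξ : Fin d → ℝ |
        α * ∑ i, ξ i ^ 2 ≤ dotProduct (B.mulVec ξ) ξ} :=
      isClosed_le (continuous_const.mul hsq) (hdp.comp (continuous_id.prodMk continuous_id))
    intro ξ
    have hsub : closure D ⊆ _ := hcl.closure_subset_iff.2 h1
    exact hsub (hD ξ)
  have h2' : ∀ ξ η, dotProduct (B.mulVec ξ) η ≤
      dotProduct (B.mulVec ξ) ξ + β / 4 * ∑ i, η i ^ 2 := by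
    have hcl : IsClosed {p : (Fin d → ℝ) × (Fin d → ℝ) |
        dotProduct (B.mulVec p.1) p.2 ≤
          dotProduct (B.mulVec p.1) p.1 + β / 4 * ∑ i, p.2 i ^ 2} :=
      isClosed_le hdp ((hdp.comp (continuous_fst.prodMk continuous_fst)).add
        (continuous_const.mul (hsq.comp continuous_snd)))
    intro ξ η
    have hsub0 : D ×ˢ D ⊆ {p : (Fin d → ℝ) × (Fin d → ℝ) |
        dotProduct (B.mulVec p.1) p.2 ≤
          dotProduct (B.mulVec p.1) p.1 + β / 4 * ∑ i, p.2 i ^ 2} :=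
      fun p hp => h2 p.1 hp.1 p.2 hp.2
    have hsub : closure (D ×ˢ D) ⊆ _ := hcl.closure_subset_iff.2 hsub0
    exact hsub ((hD.prod hD) (ξ, η))
  intro ξ
  refine ⟨h1' ξ, ?_⟩
  have hkey := h2' ξ ((2 / β) • B.mulVec ξ)
  set v := B.mulVec ξ with hv
  have e1 : dotProduct v ((2 / β) • v) = (2 / β) * ∑ i, v i ^ 2 := by
    simp only [dotProduct, Pi.smul_apply, smul_eq_mul, Finset.mul_sum]
    exact Finset.sum_congr rfl fun i _ => by ring
  have e2 : (∑ i, ((2 / β) • v) i ^ 2) = (2 / β) ^ 2 * ∑ i, v i ^ 2 := by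
    simp only [Pi.smul_apply, smul_eq_mul, Finset.mul_sum, mul_pow]
  rw [e1, e2] at hkey
  have hb : β ≠ 0 := hβ.ne'
  have e3 : β / 4 * ((2 / β) ^ 2 * ∑ i, v i ^ 2) = (1 / β) * ∑ i, v i ^ 2 := by
    field_simp
    ring
  rw [e3] at hkey
  have e4 : (2 / β) * ∑ i, v i ^ 2 - (1 / β) * ∑ i, v i ^ 2 = (1 / β) * ∑ i, v i ^ 2 := by
    field_simp
    ring
  linarith

/-- The class `M(α,β;U)` is closed under weak-* limits: if `A_n ∈ M(α,β;U)` converge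
weak-* (entrywise, against all `L¹(U)` functions) to a measurable essentially bounded
`A`, then `A ∈ M(α,β;U)`. -/
theorem stmt14 (d : ℕ) (hd : 1 ≤ d) (α β : ℝ) (hα : 0 < α) (hαβ : α ≤ β)
    (U : Set (EuclideanSpace ℝ (Fin d))) (hU : IsOpen U)
    (A : ℕ → EuclideanSpace ℝ (Fin d) → Matrix (Fin d) (Fin d) ℝ)
    (hA : ∀ n, MemM d α β U (A n))
    (Alim : EuclideanSpace ℝ (Fin d) → Matrix (Fin d) (Fin d) ℝ)
    (hAlm : ∀ i j, Measurable fun x => Alim x i j)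
    (hAlb : ∃ M : ℝ, ∀ᵐ x ∂(volume.restrict U), ∀ i j, |Alim x i j| ≤ M)
    (hconv : ∀ i j, ∀ g : EuclideanSpace ℝ (Fin d) → ℝ,
      Integrable g (volume.restrict U) →
      Tendsto (fun n => ∫ x in U, A n x i j * g x) atTop
        (𝓝 (∫ x in U, Alim x i j * g x))) :
    MemM d α β U Alim := by
  obtain ⟨M, hM⟩ := hAlb
  have hβ : 0 < β := lt_of_lt_of_le hα hαβ
  have main : ∀ (ξ ζ : Fin d → ℝ) (c : ℝ),
      (∀ n, ∀ᵐ x ∂(volume.restrict U),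
        0 ≤ (∑ i, ∑ j, ζ i * ξ j * A n x i j) + c) →
      (∀ᵐ x ∂(volume.restrict U), 0 ≤ (∑ i, ∑ j, ζ i * ξ j * Alim x i j) + c) := by
    intro ξ ζ c hn
    refine aux_ae_nonneg (volume.restrict U) _ ?_ ((∑ i, ∑ j, |ζ i * ξ j|) * M + |c|) ?_ ?_
    · exact (Finset.measurable_sum _ fun i _ =>
        Finset.measurable_sum _ fun j _ => (hAlm i j).const_mul _).add measurable_const
    · filter_upwards [hM] with x hx
      have h1 : |∑ i, ∑ j, ζ i * ξ j * Alim x i j| ≤ ∑ i, ∑ j, |ζ i * ξ j| * M := by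
        refine (Finset.abs_sum_le_sum_abs _ _).trans (Finset.sum_le_sum fun i _ => ?_)
        refine (Finset.abs_sum_le_sum_abs _ _).trans (Finset.sum_le_sum fun j _ => ?_)
        rw [abs_mul]
        exact mul_le_mul_of_nonneg_left (hx i j) (abs_nonneg _)
      calc |(∑ i, ∑ j, ζ i * ξ j * Alim x i j) + c|
          ≤ |∑ i, ∑ j, ζ i * ξ j * Alim x i j| + |c| := abs_add_le _ _
        _ ≤ (∑ i, ∑ j, |ζ i * ξ j| * M) + |c| := add_le_add_left h1 _
        _ = (∑ i, ∑ j, |ζ i * ξ j|) * M + |c| := by rw [Finset.sum_mul]; simp [Finset.sum_mul]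
    · intro E hE hEfin
      set g : EuclideanSpace ℝ (Fin d) → ℝ := E.indicator fun _ => (1 : ℝ) with hg
      have hgint : Integrable g (volume.restrict U) := by
        rw [hg, integrable_indicator_iff hE]
        exact integrableOn_const hEfin.ne
      have hmulg : ∀ h : EuclideanSpace ℝ (Fin d) → ℝ,
          (∫ x in U, h x * g x) = ∫ x in E, h x ∂(volume.restrict U) := by
        intro h
        have he : (fun x => h x * g x) = E.indicator h := by
          funext x
          by_cases hx : x ∈ E <;> simp [hg, Set.indicator, hx]
        calc (∫ x in U, h x * g x)
            = ∫ x, E.indicator h x ∂(volume.restrict U) := by rw [← he]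
          _ = ∫ x in E, h x ∂(volume.restrict U) := integral_indicator hE
      have hAint : ∀ i j, Integrable (fun x => Alim x i j)
          ((volume.restrict U).restrict E) := by
        intro i j
        refine Integrable.mono' (g := fun _ => M) (integrableOn_const hEfin.ne)
          (hAlm i j).aestronglyMeasurable.restrict ?_
        exact ae_restrict_of_ae (hM.mono fun x hx => by simpa [Real.norm_eq_abs] using hx i j)
      have hAnint : ∀ n i j, Integrable (fun x => A n x i j)
          ((volume.restrict U).restrict E) := by
        intro n i j
        obtain ⟨Mn, hMn⟩ := (hA n).2.1
        refine Integrable.mono' (g := fun _ => Mn) (integrableOn_const hEfin.ne)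
          ((hA n).1 i j).aestronglyMeasurable.restrict ?_
        exact ae_restrict_of_ae (hMn.mono fun x hx => by simpa [Real.norm_eq_abs] using hx i j)
      have split : ∀ (B : EuclideanSpace ℝ (Fin d) → Matrix (Fin d) (Fin d) ℝ),
          (∀ i j, Integrable (fun x => B x i j) ((volume.restrict U).restrict E)) →
          (∫ x in E, ((∑ i, ∑ j, ζ i * ξ j * B x i j) + c) ∂(volume.restrict U))
            = (∑ i, ∑ j, ζ i * ξ j * ∫ x in E, B x i j ∂(volume.restrict U))
              + ((volume.restrict U) E).toReal * c := by
        intro B hB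
        rw [integral_add (integrable_finset_sum _ fun i _ => integrable_finset_sum _
            fun j _ => (hB i j).const_mul _) (integrableOn_const hEfin.ne),
          integral_finset_sum _ fun i _ => integrable_finset_sum _
            fun j _ => (hB i j).const_mul _]
        congr 1
        · refine Finset.sum_congr rfl fun i _ => ?_
          rw [integral_finset_sum _ fun j _ => (hB i j).const_mul _]
          exact Finset.sum_congr rfl fun j _ => integral_const_mul _ _
        · rw [setIntegral_const, smul_eq_mul]; rfl
      have hT : Tendsto
          (fun n => ∫ x in E, ((∑ i, ∑ j, ζ i * ξ j * A n x i j) + c) ∂(volume.restrict U))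
          atTop
          (𝓝 (∫ x in E, ((∑ i, ∑ j, ζ i * ξ j * Alim x i j) + c) ∂(volume.restrict U))) := by
        rw [split Alim hAint]
        have he : (fun n => ∫ x in E,
            ((∑ i, ∑ j, ζ i * ξ j * A n x i j) + c) ∂(volume.restrict U))
            = fun n => (∑ i, ∑ j, ζ i * ξ j * ∫ x in E, A n x i j ∂(volume.restrict U))
              + ((volume.restrict U) E).toReal * c :=
          funext fun n => split (A n) (hAnint n)
        rw [he]
        refine Tendsto.add (tendsto_finset_sum _ fun i _ => tendsto_finset_sum _
          fun j _ => Tendsto.const_mul _ ?_) tendsto_const_nhds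
        have := hconv i j g hgint
        rw [hmulg (fun x => Alim x i j)] at this
        have he2 : (fun n => ∫ x in U, A n x i j * g x)
            = fun n => ∫ x in E, A n x i j ∂(volume.restrict U) :=
          funext fun n => hmulg (fun x => A n x i j)
        rwa [he2] at this
      refine ge_of_tendsto' hT fun n => ?_
      exact integral_nonneg_of_ae (ae_restrict_of_ae (hn n))
  obtain ⟨D, hDc, hDd⟩ := TopologicalSpace.exists_countable_dense (Fin d → ℝ)
  have P : ∀ ξ ∈ D, ∀ᵐ x ∂(volume.restrict U),
      0 ≤ (∑ i, ∑ j, ξ i * ξ j * Alim x i j) + -(α * ∑ i, ξ i ^ 2) := by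
    intro ξ _
    refine main ξ ξ _ fun n => ?_
    filter_upwards [(hA n).2.2] with x hx
    have h1 := (hx ξ).1
    rw [lin_eq]
    linarith
  have Q : ∀ ξ ∈ D, ∀ η ∈ D, ∀ᵐ x ∂(volume.restrict U),
      0 ≤ (∑ i, ∑ j, (ξ - η) i * ξ j * Alim x i j) + β / 4 * ∑ i, η i ^ 2 := by
    intro ξ _ η _
    refine main ξ (ξ - η) _ fun n => ?_
    filter_upwards [(hA n).2.2] with x hx
    have h2 := (hx ξ).2
    rw [lin_eq]
    set v := (A n x).mulVec ξ with hv
    have hterm : ∀ i ∈ Finset.univ, v i * η i ≤ (1 / β) * v i ^ 2 + β / 4 * η i ^ 2 := by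
      intro i _
      have h0 : 0 ≤ (1 / β) * (v i - β / 2 * η i) ^ 2 :=
        mul_nonneg (by positivity) (sq_nonneg _)
      have he : (1 / β) * (v i - β / 2 * η i) ^ 2
          = (1 / β) * v i ^ 2 - v i * η i + β / 4 * η i ^ 2 := by
        field_simp
        ring
      linarith
    have key : dotProduct v η ≤ (1 / β) * ∑ i, v i ^ 2 + β / 4 * ∑ i, η i ^ 2 :=
      calc dotProduct v η = ∑ i, v i * η i := rfl
        _ ≤ ∑ i, ((1 / β) * v i ^ 2 + β / 4 * η i ^ 2) := Finset.sum_le_sum hterm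
        _ = (1 / β) * ∑ i, v i ^ 2 + β / 4 * ∑ i, η i ^ 2 := by
            rw [Finset.sum_add_distrib, Finset.mul_sum, Finset.mul_sum]
    have hsub : dotProduct v (ξ - η)
        = dotProduct v ξ - dotProduct v η := dotProduct_sub v ξ η
    rw [hsub]
    linarith
  have Hae : ∀ᵐ x ∂(volume.restrict U),
      (∀ ξ ∈ D, 0 ≤ (∑ i, ∑ j, ξ i * ξ j * Alim x i j) + -(α * ∑ i, ξ i ^ 2)) ∧
      (∀ ξ ∈ D, ∀ η ∈ D,
        0 ≤ (∑ i, ∑ j, (ξ - η) i * ξ j * Alim x i j) + β / 4 * ∑ i, η i ^ 2) := by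
    rw [eventually_and]
    exact ⟨(ae_ball_iff hDc).2 P,
      (ae_ball_iff hDc).2 fun ξ hξ => (ae_ball_iff hDc).2 (Q ξ hξ)⟩
  refine ⟨hAlm, ⟨M, hM⟩, ?_⟩
  filter_upwards [Hae] with x hx
  refine aux_pointwise (α := α) hβ (Alim x) D hDd ?_ ?_
  · intro ξ hξ
    have := hx.1 ξ hξ
    rw [lin_eq] at this
    linarith
  · intro ξ hξ η hη
    have := hx.2 ξ hξ η hη
    rw [lin_eq, dotProduct_sub] at this
    linarith

end
end
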